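/- Let m, k, p ∈ ℕ. Let Σ be a real m×m symmetric positive definite matrix, Ω a real p×p symmetric positive definite matrix, A a real p×m matrix, and V a real p×k matrix with linearly independent columns. Define Ω̄ = (VᵀΩ⁻¹V)⁻¹ and Ā = −Ω̄VᵀΩ⁻¹A. Then the matrix Σ⁻¹ − ĀᵀΩ̄⁻¹Ā + AᵀΩ⁻¹A is symmetric positive definite. -/

import Mathlib

open Matrix

/-- positive definiteness of `Θ̄⁻¹ = Σ⁻¹ − Āᵀ Ω̄⁻¹ Ā + Aᵀ Ω⁻¹ A`
for `Ω̄ = (Vᵀ Ω⁻¹ V)⁻¹` and `Ā = −Ω̄ Vᵀ Ω⁻¹ A`, when `Σ`, `Ω` are positive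
definite and `V` has linearly independent columns. -/
theorem theta_bar_inv_posDef
    (m k p : ℕ)
    (S : Matrix (Fin m) (Fin m) ℝ) (hS : S.PosDef)
    (Ω : Matrix (Fin p) (Fin p) ℝ) (hΩ : Ω.PosDef)
    (A : Matrix (Fin p) (Fin m) ℝ) (V : Matrix (Fin p) (Fin k) ℝ)
    (hV : LinearIndependent ℝ (fun j : Fin k => (Vᵀ j : Fin p → ℝ)))
    (Ωbar : Matrix (Fin k) (Fin k) ℝ) (hΩbar : Ωbar = (Vᵀ * Ω⁻¹ * V)⁻¹)
    (Abar : Matrix (Fin k) (Fin m) ℝ) (hAbar : Abar = -(Ωbar * Vᵀ * Ω⁻¹ * A)) :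
    (S⁻¹ - Abarᵀ * Ωbar⁻¹ * Abar + Aᵀ * Ω⁻¹ * A).PosDef := by
  have hΩinv : (Ω⁻¹).PosDef := hΩ.inv
  have hΩinvT : (Ω⁻¹)ᵀ = Ω⁻¹ := by
    have := hΩinv.isHermitian
    rwa [Matrix.IsHermitian, conjTranspose_eq_transpose_of_trivial] at this
  set W := Vᵀ * Ω⁻¹ * V with hWdef
  have hVinj : Function.Injective V.mulVec := Matrix.mulVec_injective_iff.mpr hV
  have hW : W.PosDef := by
    refine Matrix.PosDef.of_dotProduct_mulVec_pos ?_ ?_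
    · rw [Matrix.IsHermitian, conjTranspose_eq_transpose_of_trivial, hWdef,
        transpose_mul, transpose_mul, transpose_transpose, hΩinvT, Matrix.mul_assoc]
    · intro x hx
      have hVx : V *ᵥ x ≠ 0 := fun h => hx (hVinj (by simpa using h))
      have h := hΩinv.dotProduct_mulVec_pos hVx
      rw [star_trivial] at h ⊢
      calc 0 < (V *ᵥ x) ⬝ᵥ (Ω⁻¹ *ᵥ (V *ᵥ x)) := h
        _ = x ⬝ᵥ W *ᵥ x := by
            rw [hWdef, ← mulVec_mulVec, ← mulVec_mulVec, dotProduct_mulVec x,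
              vecMul_transpose]
  have hWdet : IsUnit W.det := (Matrix.isUnit_iff_isUnit_det W).mp hW.isUnit
  have hWinv : W⁻¹ * W = 1 := Matrix.nonsing_inv_mul W hWdet
  have hWinv' : ∀ {q : ℕ} (X : Matrix (Fin k) (Fin q) ℝ), W⁻¹ * (W * X) = X := by
    intro q X; rw [← Matrix.mul_assoc, hWinv, Matrix.one_mul]
  have hWinvT : (W⁻¹)ᵀ = W⁻¹ := by
    have := hW.inv.isHermitian
    rwa [Matrix.IsHermitian, conjTranspose_eq_transpose_of_trivial] at this
  -- square root of Ω⁻¹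
  obtain ⟨R, hR2, hRT⟩ : ∃ R : Matrix (Fin p) (Fin p) ℝ, R * R = Ω⁻¹ ∧ Rᵀ = R := by
    open MatrixOrder in
    refine ⟨CFC.sqrt (Ω⁻¹), CFC.sqrt_mul_sqrt_self _ hΩinv.posSemidef.nonneg, ?_⟩
    have := (CFC.sqrt_nonneg (Ω⁻¹)).posSemidef.1
    rwa [Matrix.IsHermitian, conjTranspose_eq_transpose_of_trivial] at this
  have hR2' : ∀ {q : ℕ} (X : Matrix (Fin p) (Fin q) ℝ), R * (R * X) = Ω⁻¹ * X := by
    intro q X; rw [← Matrix.mul_assoc, hR2]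
  have hWmul : ∀ {q : ℕ} (X : Matrix (Fin k) (Fin q) ℝ),
      Vᵀ * (Ω⁻¹ * (V * X)) = W * X := by
    intro q X
    rw [← Matrix.mul_assoc Vᵀ Ω⁻¹ (V * X), ← Matrix.mul_assoc (Vᵀ * Ω⁻¹) V X, hWdef]
  set P := R * V * W⁻¹ * Vᵀ * R with hPdef
  have hPT : Pᵀ = P := by
    rw [hPdef]
    simp only [transpose_mul, transpose_transpose, hRT, hWinvT, Matrix.mul_assoc]
  have hPP : P * P = P := by
    rw [hPdef]
    simp only [Matrix.mul_assoc, hR2', hWmul, hWinv']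
  have hMeq : Ω⁻¹ - Ω⁻¹ * V * W⁻¹ * Vᵀ * Ω⁻¹ = ((1 - P) * R)ᴴ * ((1 - P) * R) := by
    rw [conjTranspose_eq_transpose_of_trivial, transpose_mul, hRT, transpose_sub,
      transpose_one, hPT, hPdef]
    simp only [Matrix.mul_sub, Matrix.sub_mul, Matrix.mul_one, Matrix.one_mul,
      Matrix.mul_assoc, hR2, hR2', hWmul, hWinv']
    abel
  have hMpsd : (Ω⁻¹ - Ω⁻¹ * V * W⁻¹ * Vᵀ * Ω⁻¹).PosSemidef := by
    rw [hMeq]; exact posSemidef_conjTranspose_mul_self _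
  -- rewrite the target
  have hΩbarInv : Ωbar⁻¹ = W := by
    rw [hΩbar, Matrix.nonsing_inv_nonsing_inv W hWdet]
  have hAbarT : Abarᵀ = -(Aᵀ * Ω⁻¹ * V * W⁻¹) := by
    rw [hAbar, hΩbar, transpose_neg]
    simp only [transpose_mul, transpose_transpose, hΩinvT, hWinvT, Matrix.mul_assoc]
  have key : S⁻¹ - Abarᵀ * Ωbar⁻¹ * Abar + Aᵀ * Ω⁻¹ * A
      = S⁻¹ + Aᵀ * (Ω⁻¹ - Ω⁻¹ * V * W⁻¹ * Vᵀ * Ω⁻¹) * A := by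
    rw [hAbarT, hΩbarInv, hAbar, hΩbar]
    simp only [Matrix.neg_mul, Matrix.mul_neg, neg_neg, Matrix.mul_sub, Matrix.sub_mul,
      Matrix.mul_assoc, hWinv']
    abel
  rw [key]
  have hAMA : (Aᵀ * (Ω⁻¹ - Ω⁻¹ * V * W⁻¹ * Vᵀ * Ω⁻¹) * A).PosSemidef := by
    have := hMpsd.conjTranspose_mul_mul_same A
    rwa [conjTranspose_eq_transpose_of_trivial] at this
  exact hS.inv.add_posSemidef hAMA
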